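/- arXiv:2506.09687 — 4 statements merged into one kernel-verified Lean document; each statement's English description precedes it below -/
import Mathlib

section
/- Consider the space 𝔽^{n×n} (𝔽 = ℝ or ℂ) with the spectral norm. A linear functional f on 𝔽^{n×n} of dual norm 1 is extremal if and only if its standard matrix representation F ∈ 𝔽^{n×n} is of the form F = uvᴴ for vectors u, v ∈ 𝔽^n with ‖u‖₂ = ‖v‖₂ = 1. -/
open Matrix

variable {𝕜 : Type*} [RCLike 𝕜]

/-- The spectral norm (matrix 2-norm): the supremum of `‖A v‖₂` over unit Euclidean
norm vectors `v`. -/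
noncomputable def specNorm {m : Type*} [Fintype m] [DecidableEq m]
    (A : Matrix m m 𝕜) : ℝ :=
  sSup {r : ℝ | ∃ v : EuclideanSpace 𝕜 m, ‖v‖ = 1 ∧ r = ‖Matrix.toEuclideanLin A v‖}

/-- `Xs` is a spectral (best) approximation of `Y` from the subspace `𝒳`. -/
def IsSpectralApprox {m : Type*} [Fintype m] [DecidableEq m]
    (𝒳 : Submodule 𝕜 (Matrix m m 𝕜)) (Y Xs : Matrix m m 𝕜) : Prop :=
  Xs ∈ 𝒳 ∧ ∀ X ∈ 𝒳, specNorm (Y - Xs) ≤ specNorm (Y - X)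

/-- The span of the maximal right singular vectors of `M`. -/
noncomputable def maxRSV {m : Type*} [Fintype m] [DecidableEq m]
    (M : Matrix m m 𝕜) : Submodule 𝕜 (EuclideanSpace 𝕜 m) :=
  Submodule.span 𝕜 {v : EuclideanSpace 𝕜 m | ‖v‖ = 1 ∧ ‖Matrix.toEuclideanLin M v‖ = specNorm M}

/-- The `k`-dimensional field of the `k` matrices `A 0, …, A (k-1)` restricted to
the subspace `S`. -/
def kField {m : Type*} [Fintype m] [DecidableEq m] {k : ℕ}
    (A : Fin k → Matrix m m 𝕜) (S : Submodule 𝕜 (EuclideanSpace 𝕜 m)) : Set (Fin k → 𝕜) :=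
  {w | ∃ v : EuclideanSpace 𝕜 m, v ∈ S ∧ ‖v‖ = 1 ∧
     w = fun i => (inner 𝕜 v (Matrix.toEuclideanLin (A i) v) : 𝕜)}

/-- min-max value -/
noncomputable def minMaxVal {m : Type*} [Fintype m] [DecidableEq m]
    (𝒳 : Submodule 𝕜 (Matrix m m 𝕜)) (Y : Matrix m m 𝕜) : ℝ :=
  sInf {r : ℝ | ∃ X ∈ 𝒳, r = specNorm (Y - X)}

/-- max-min value -/
noncomputable def maxMinVal {m : Type*} [Fintype m] [DecidableEq m]
    (𝒳 : Submodule 𝕜 (Matrix m m 𝕜)) (Y : Matrix m m 𝕜) : ℝ :=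
  sSup {r : ℝ | ∃ v : EuclideanSpace 𝕜 m, ‖v‖ = 1 ∧
    r = sInf {s : ℝ | ∃ X ∈ 𝒳, s = ‖Matrix.toEuclideanLin (Y - X) v‖}}

/-- dual norm of a linear functional w.r.t. the spectral norm -/
noncomputable def dualNorm {m : Type*} [Fintype m] [DecidableEq m]
    (f : Matrix m m 𝕜 →ₗ[𝕜] 𝕜) : ℝ :=
  sSup {r : ℝ | ∃ A : Matrix m m 𝕜, specNorm A = 1 ∧ r = ‖f A‖}

/-- the rank one matrix `u vᴴ` -/
def outer {m : Type*} (u v : EuclideanSpace 𝕜 m) : Matrix m m 𝕜 :=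
  Matrix.of fun i j => u i * star (v j)

/-- nuclear (Schatten 1) norm: the sum of the singular values -/
noncomputable def nuclearNorm {m : Type*} [Fintype m] [DecidableEq m]
    (F : Matrix m m 𝕜) : ℝ :=
  ∑ i, Real.sqrt ((Matrix.isHermitian_conjTranspose_mul_self F).eigenvalues i)

set_option synthInstance.maxHeartbeats 400000
set_option maxHeartbeats 1000000

section ExtremalHelpers
variable {n : ℕ}
local notation "E" => EuclideanSpace 𝕜 (Fin n)



lemma toEuclideanLin_outer (a b x : E) :
    Matrix.toEuclideanLin (outer a b) x = (inner 𝕜 b x : 𝕜) • a := by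
  ext i
  simp [Matrix.toEuclideanLin_apply, Matrix.mulVec, dotProduct, outer, PiLp.inner_apply,
    Finset.sum_mul, mul_comm, mul_left_comm, Finset.mul_sum]

lemma trace_outer_mul (u v : E) (A : Matrix (Fin n) (Fin n) 𝕜) :
    Matrix.trace ((outer u v)ᴴ * A) = (inner 𝕜 u (Matrix.toEuclideanLin A v) : 𝕜) := by
  simp [Matrix.trace, Matrix.mul_apply, Matrix.conjTranspose_apply, outer,
    PiLp.inner_apply, Matrix.toEuclideanLin_apply, Matrix.mulVec, dotProduct,
    Finset.mul_sum, Matrix.diag]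
  rw [Finset.sum_comm]
  apply Finset.sum_congr rfl; intro k _
  rw [Finset.sum_mul]; apply Finset.sum_congr rfl; intro j _
  ring


lemma exists_unit (hn : 0 < n) : ∃ v : E, ‖v‖ = 1 :=
  ⟨EuclideanSpace.single ⟨0, hn⟩ 1, by simp [EuclideanSpace.norm_single]⟩

lemma specNorm_bdd (A : Matrix (Fin n) (Fin n) 𝕜) :
    BddAbove {r : ℝ | ∃ v : E, ‖v‖ = 1 ∧ r = ‖Matrix.toEuclideanLin A v‖} := by
  refine ⟨‖(Matrix.toEuclideanLin A).toContinuousLinearMap‖, ?_⟩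
  rintro r ⟨v, hv, rfl⟩
  have := (Matrix.toEuclideanLin A).toContinuousLinearMap.le_opNorm v
  simpa [hv] using this

lemma le_specNorm (A : Matrix (Fin n) (Fin n) 𝕜) {v : E} (hv : ‖v‖ = 1) :
    ‖Matrix.toEuclideanLin A v‖ ≤ specNorm A :=
  le_csSup (specNorm_bdd A) ⟨v, hv, rfl⟩

lemma specNorm_le (hn : 0 < n) {A : Matrix (Fin n) (Fin n) 𝕜} {c : ℝ}
    (h : ∀ v : E, ‖v‖ = 1 → ‖Matrix.toEuclideanLin A v‖ ≤ c) : specNorm A ≤ c := by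
  obtain ⟨v, hv⟩ := exists_unit (𝕜 := 𝕜) hn
  exact csSup_le ⟨_, v, hv, rfl⟩ (by rintro r ⟨v, hv, rfl⟩; exact h v hv)

lemma specNorm_nonneg (hn : 0 < n) (A : Matrix (Fin n) (Fin n) 𝕜) : 0 ≤ specNorm A := by
  obtain ⟨v, hv⟩ := exists_unit (𝕜 := 𝕜) hn
  exact (norm_nonneg _).trans (le_specNorm A hv)

lemma norm_apply_le (hn : 0 < n) (A : Matrix (Fin n) (Fin n) 𝕜) (x : E) :
    ‖Matrix.toEuclideanLin A x‖ ≤ specNorm A * ‖x‖ := by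
  rcases eq_or_ne x 0 with rfl | hx
  · simp
  · have hxn : (0:ℝ) < ‖x‖ := norm_pos_iff.2 hx
    set c : 𝕜 := (RCLike.ofReal ‖x‖ : 𝕜) with hc
    have hc0 : c ≠ 0 := by
      simp [hc, RCLike.ofReal_eq_zero, hxn.ne']
    set v : E := c⁻¹ • x with hv
    have hvn : ‖v‖ = 1 := by
      rw [hv, norm_smul, norm_inv, RCLike.norm_ofReal, abs_of_pos hxn, inv_mul_cancel₀ hxn.ne']
    have hxv : x = c • v := by rw [hv, smul_smul, mul_inv_cancel₀ hc0, one_smul]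
    calc ‖Matrix.toEuclideanLin A x‖ = ‖c‖ * ‖Matrix.toEuclideanLin A v‖ := by
          rw [hxv, LinearMap.map_smul, norm_smul]
      _ ≤ ‖c‖ * specNorm A := by
          exact mul_le_mul_of_nonneg_left (le_specNorm A hvn) (norm_nonneg _)
      _ = specNorm A * ‖x‖ := by
          rw [RCLike.norm_ofReal, abs_of_pos hxn, mul_comm]

lemma specNorm_smul_le (hn : 0 < n) (c : 𝕜) (A : Matrix (Fin n) (Fin n) 𝕜) :
    specNorm (c • A) ≤ ‖c‖ * specNorm A := by
  refine specNorm_le hn fun v hv => ?_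
  rw [_root_.map_smul, LinearMap.smul_apply, norm_smul]
  exact mul_le_mul_of_nonneg_left (le_specNorm A hv) (norm_nonneg _)

lemma specNorm_smul (hn : 0 < n) (c : 𝕜) (A : Matrix (Fin n) (Fin n) 𝕜) :
    specNorm (c • A) = ‖c‖ * specNorm A := by
  rcases eq_or_ne c 0 with rfl | hc
  · simp only [norm_zero, zero_mul, zero_smul]
    refine le_antisymm (specNorm_le hn fun v hv => by simp) (specNorm_nonneg hn 0)
  · refine le_antisymm (specNorm_smul_le hn c A) ?_
    have := specNorm_smul_le hn c⁻¹ (c • A)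
    rw [smul_smul, inv_mul_cancel₀ hc, one_smul, norm_inv] at this
    calc ‖c‖ * specNorm A ≤ ‖c‖ * (‖c‖⁻¹ * specNorm (c • A)) :=
          mul_le_mul_of_nonneg_left this (norm_nonneg _)
      _ = specNorm (c • A) := by
          rw [← mul_assoc, mul_inv_cancel₀ (norm_ne_zero_iff.2 hc), one_mul]

lemma matrix_decomp (p q : OrthonormalBasis (Fin n) 𝕜 E) (A : Matrix (Fin n) (Fin n) 𝕜) :
    A = ∑ i, ∑ j, (inner 𝕜 (p i) (Matrix.toEuclideanLin A (q j)) : 𝕜) • outer (p i) (q j) := by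
  apply Matrix.toEuclideanLin.injective
  apply Module.Basis.ext q.toBasis
  intro j
  rw [map_sum, LinearMap.sum_apply, OrthonormalBasis.coe_toBasis]
  have : ∀ i, (Matrix.toEuclideanLin
      (∑ j', (inner 𝕜 (p i) (Matrix.toEuclideanLin A (q j')) : 𝕜) • outer (p i) (q j'))) (q j)
      = (inner 𝕜 (p i) (Matrix.toEuclideanLin A (q j)) : 𝕜) • p i := by
    intro i
    rw [map_sum, LinearMap.sum_apply]
    have : ∀ j', ((Matrix.toEuclideanLin
        ((inner 𝕜 (p i) (Matrix.toEuclideanLin A (q j')) : 𝕜) • outer (p i) (q j'))) (q j))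
        = ((if j' = j then (1:𝕜) else 0) * (inner 𝕜 (p i) (Matrix.toEuclideanLin A (q j')) : 𝕜)) • p i := by
      intro j'
      rw [_root_.map_smul, LinearMap.smul_apply, toEuclideanLin_outer,
        orthonormal_iff_ite.mp q.orthonormal, smul_smul, mul_comm]
    rw [Finset.sum_congr rfl fun j' _ => this j']
    simp
  rw [Finset.sum_congr rfl fun i _ => this i]
  exact (p.sum_repr' (Matrix.toEuclideanLin A (q j))).symm


lemma norm_f_le_of_specNorm_one (hn : 0 < n) (f : Matrix (Fin n) (Fin n) 𝕜 →ₗ[𝕜] 𝕜)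
    {A : Matrix (Fin n) (Fin n) 𝕜} (hA : specNorm A = 1) :
    ‖f A‖ ≤ ∑ i, ∑ j, ‖f (outer ((EuclideanSpace.basisFun (Fin n) 𝕜) i)
      ((EuclideanSpace.basisFun (Fin n) 𝕜) j))‖ := by
  set e := EuclideanSpace.basisFun (Fin n) 𝕜
  conv_lhs => rw [matrix_decomp e e A]
  rw [map_sum]
  refine (norm_sum_le _ _).trans (Finset.sum_le_sum fun i _ => ?_)
  rw [map_sum]
  refine (norm_sum_le _ _).trans (Finset.sum_le_sum fun j _ => ?_)
  rw [LinearMap.map_smul, norm_smul]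
  have h1 : ‖(inner 𝕜 (e i) (Matrix.toEuclideanLin A (e j)) : 𝕜)‖ ≤ 1 := by
    refine (norm_inner_le_norm _ _).trans ?_
    have he : ∀ k, ‖e k‖ = 1 := fun k => e.orthonormal.1 k
    have := norm_apply_le hn A (e j)
    rw [he j, mul_one, hA] at this
    rw [he i, one_mul]
    exact this
  calc ‖(inner 𝕜 (e i) (Matrix.toEuclideanLin A (e j)) : 𝕜)‖ * ‖f (outer (e i) (e j))‖
      ≤ 1 * ‖f (outer (e i) (e j))‖ := mul_le_mul_of_nonneg_right h1 (norm_nonneg _)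
    _ = _ := one_mul _

lemma dual_bdd (hn : 0 < n) (f : Matrix (Fin n) (Fin n) 𝕜 →ₗ[𝕜] 𝕜) :
    BddAbove {r : ℝ | ∃ A : Matrix (Fin n) (Fin n) 𝕜, specNorm A = 1 ∧ r = ‖f A‖} := by
  refine ⟨∑ i, ∑ j, ‖f (outer ((EuclideanSpace.basisFun (Fin n) 𝕜) i)
      ((EuclideanSpace.basisFun (Fin n) 𝕜) j))‖, ?_⟩
  rintro r ⟨A, hA, rfl⟩
  exact norm_f_le_of_specNorm_one hn f hA

lemma norm_f_le (hn : 0 < n) {f : Matrix (Fin n) (Fin n) 𝕜 →ₗ[𝕜] 𝕜}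
    (hf : dualNorm f ≤ 1) (A : Matrix (Fin n) (Fin n) 𝕜) : ‖f A‖ ≤ specNorm A := by
  rcases eq_or_lt_of_le (specNorm_nonneg hn A) with h0 | hpos
  · have hA0 : A = 0 := by
      apply Matrix.toEuclideanLin.injective
      apply LinearMap.ext fun x => ?_
      have := norm_apply_le hn A x
      rw [← h0, zero_mul] at this
      simpa using le_antisymm this (norm_nonneg _)
    rw [hA0, map_zero, norm_zero]; exact specNorm_nonneg hn 0
  · set s := specNorm A with hs
    set c : 𝕜 := ((RCLike.ofReal s : 𝕜))⁻¹ with hc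
    have hcn : ‖c‖ = s⁻¹ := by
      rw [hc, norm_inv, RCLike.norm_ofReal, abs_of_pos hpos]
    have hspec : specNorm (c • A) = 1 := by
      rw [specNorm_smul hn, hcn, ← hs, inv_mul_cancel₀ hpos.ne']
    have hmem : ‖f (c • A)‖ ≤ dualNorm f := le_csSup (dual_bdd hn f) ⟨c • A, hspec, rfl⟩
    rw [LinearMap.map_smul, norm_smul, hcn] at hmem
    have := hmem.trans hf
    calc ‖f A‖ = s * (s⁻¹ * ‖f A‖) := by
          rw [← mul_assoc, mul_inv_cancel₀ hpos.ne', one_mul]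
      _ ≤ s * 1 := mul_le_mul_of_nonneg_left this hpos.le
      _ = s := mul_one s

noncomputable def tfun (F : Matrix (Fin n) (Fin n) 𝕜) : Matrix (Fin n) (Fin n) 𝕜 →ₗ[𝕜] 𝕜 where
  toFun A := Matrix.trace (Fᴴ * A)
  map_add' A B := by simp [Matrix.mul_add]
  map_smul' c A := by simp [Matrix.mul_smul]

@[simp] lemma tfun_apply (F A : Matrix (Fin n) (Fin n) 𝕜) :
    tfun F A = Matrix.trace (Fᴴ * A) := rfl

lemma trace_decomp_mul (σ : Fin n → ℝ) (u v : Fin n → E) (A : Matrix (Fin n) (Fin n) 𝕜) :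
    Matrix.trace ((∑ i, ((σ i : ℝ) : 𝕜) • outer (u i) (v i))ᴴ * A)
      = ∑ i, ((σ i : ℝ) : 𝕜) * (inner 𝕜 (u i) (Matrix.toEuclideanLin A (v i)) : 𝕜) := by
  rw [Matrix.conjTranspose_sum, Finset.sum_mul, Matrix.trace_sum]
  refine Finset.sum_congr rfl fun i _ => ?_
  rw [Matrix.conjTranspose_smul, Matrix.smul_mul, Matrix.trace_smul, trace_outer_mul,
    RCLike.star_def, RCLike.conj_ofReal, smul_eq_mul]

lemma toEuclideanLin_sum_outer_apply (u v : Fin n → E) (x : E) :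
    Matrix.toEuclideanLin (∑ i, outer (u i) (v i)) x = ∑ i, (inner 𝕜 (v i) x : 𝕜) • u i := by
  rw [map_sum, LinearMap.sum_apply]
  exact Finset.sum_congr rfl fun i _ => toEuclideanLin_outer (u i) (v i) x

lemma sum_outer_norm_apply (u v : OrthonormalBasis (Fin n) 𝕜 E) (x : E) :
    ‖Matrix.toEuclideanLin (∑ i, outer (u i) (v i)) x‖ = ‖x‖ := by
  rw [toEuclideanLin_sum_outer_apply]
  have h : u.repr (∑ i, (inner 𝕜 (v i) x : 𝕜) • u i) = v.repr x := by
    ext i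
    simp [OrthonormalBasis.repr_apply_apply, inner_sum, inner_smul_right,
      orthonormal_iff_ite.mp u.orthonormal, Pi.single_apply]
  calc ‖∑ i, (inner 𝕜 (v i) x : 𝕜) • u i‖ = ‖u.repr (∑ i, (inner 𝕜 (v i) x : 𝕜) • u i)‖ :=
        (u.repr.norm_map _).symm
    _ = ‖v.repr x‖ := by rw [h]
    _ = ‖x‖ := v.repr.norm_map x

lemma specNorm_sum_outer (hn : 0 < n) (u v : OrthonormalBasis (Fin n) 𝕜 E) :
    specNorm (∑ i, outer (u i) (v i)) = 1 := by
  refine le_antisymm (specNorm_le hn fun w hw => by rw [sum_outer_norm_apply, hw]) ?_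
  obtain ⟨w, hw⟩ := exists_unit (𝕜 := 𝕜) hn
  have := le_specNorm (∑ i, outer (u i) (v i)) hw
  rwa [sum_outer_norm_apply, hw] at this

lemma sum_outer_apply_basis (u v : OrthonormalBasis (Fin n) 𝕜 E) (j : Fin n) :
    Matrix.toEuclideanLin (∑ i, outer (u i) (v i)) (v j) = u j := by
  rw [toEuclideanLin_sum_outer_apply]
  simp [orthonormal_iff_ite.mp v.orthonormal]

lemma dualNorm_decomp (hn : 0 < n) (σ : Fin n → ℝ) (hσ : ∀ i, 0 ≤ σ i)
    (u v : OrthonormalBasis (Fin n) 𝕜 E) :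
    dualNorm (tfun (∑ i, ((σ i : ℝ) : 𝕜) • outer (u i) (v i))) = ∑ i, σ i := by
  set F := ∑ i, ((σ i : ℝ) : 𝕜) • outer (u i) (v i) with hF
  set A₀ := ∑ i, outer (u i) (v i) with hA₀
  have hub : ∀ A : Matrix (Fin n) (Fin n) 𝕜, specNorm A = 1 → ‖tfun F A‖ ≤ ∑ i, σ i := by
    intro A hA
    rw [tfun_apply, hF, trace_decomp_mul]
    refine (norm_sum_le _ _).trans (Finset.sum_le_sum fun i _ => ?_)
    rw [norm_mul, RCLike.norm_ofReal, abs_of_nonneg (hσ i)]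
    have h1 : ‖(inner 𝕜 (u i) (Matrix.toEuclideanLin A (v i)) : 𝕜)‖ ≤ 1 := by
      refine (norm_inner_le_norm _ _).trans ?_
      have := norm_apply_le hn A (v i)
      rw [v.orthonormal.1 i, mul_one, hA] at this
      rw [u.orthonormal.1 i, one_mul]; exact this
    calc σ i * ‖(inner 𝕜 (u i) (Matrix.toEuclideanLin A (v i)) : 𝕜)‖ ≤ σ i * 1 :=
          mul_le_mul_of_nonneg_left h1 (hσ i)
      _ = σ i := mul_one _
  have hval : tfun F A₀ = ((∑ i, σ i : ℝ) : 𝕜) := by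
    rw [tfun_apply, hF, trace_decomp_mul]
    rw [RCLike.ofReal_sum]
    refine Finset.sum_congr rfl fun i _ => ?_
    rw [hA₀, sum_outer_apply_basis]
    rw [inner_self_eq_norm_sq_to_K, u.orthonormal.1 i]
    simp
  have hvn : ‖tfun F A₀‖ = ∑ i, σ i := by
    rw [hval, RCLike.norm_ofReal, abs_of_nonneg (Finset.sum_nonneg fun i _ => hσ i)]
  have hsp : specNorm A₀ = 1 := specNorm_sum_outer hn u v
  refine le_antisymm (csSup_le ⟨_, A₀, hsp, rfl⟩ (by rintro r ⟨A, hA, rfl⟩; exact hub A hA)) ?_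
  have := le_csSup (dual_bdd hn (tfun F)) (show (‖tfun F A₀‖ : ℝ) ∈ _ from ⟨A₀, hsp, rfl⟩)
  rwa [hvn] at this

lemma toEuclideanLin_conj_mul (F : Matrix (Fin n) (Fin n) 𝕜) (x y : E) :
    (inner 𝕜 (Matrix.toEuclideanLin F x) (Matrix.toEuclideanLin F y) : 𝕜)
      = inner 𝕜 x (Matrix.toEuclideanLin (Fᴴ * F) y) := by
  have hcomp : Matrix.toEuclideanLin (Fᴴ * F) y
      = Matrix.toEuclideanLin Fᴴ (Matrix.toEuclideanLin F y) := by
    ext i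
    simp [Matrix.toEuclideanLin_apply, ← Matrix.mulVec_mulVec]
  rw [hcomp, Matrix.toEuclideanLin_conjTranspose_eq_adjoint, LinearMap.adjoint_inner_right]

lemma svd (F : Matrix (Fin n) (Fin n) 𝕜) :
    ∃ (σ : Fin n → ℝ) (u v : OrthonormalBasis (Fin n) 𝕜 E),
      (∀ i, 0 ≤ σ i) ∧ F = ∑ i, ((σ i : ℝ) : 𝕜) • outer (u i) (v i) := by
  have hH : (Fᴴ * F).IsHermitian := Matrix.isHermitian_conjTranspose_mul_self F
  set v : OrthonormalBasis (Fin n) 𝕜 E := hH.eigenvectorBasis with hv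
  set lam : Fin n → ℝ := hH.eigenvalues with hlam
  have hlam0 : ∀ i, 0 ≤ lam i := fun i =>
    Matrix.eigenvalues_conjTranspose_mul_self_nonneg F i
  set σ : Fin n → ℝ := fun i => Real.sqrt (lam i) with hσdef
  have hσ0 : ∀ i, 0 ≤ σ i := fun i => Real.sqrt_nonneg _
  have hσsq : ∀ i, σ i * σ i = lam i := fun i => Real.mul_self_sqrt (hlam0 i)
  set T := Matrix.toEuclideanLin F with hT
  have hTv : ∀ j, Matrix.toEuclideanLin (Fᴴ * F) (v j) = ((lam j : ℝ) : 𝕜) • v j := by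
    intro j
    have h := hH.mulVec_eigenvectorBasis j
    ext i
    have := congrFun h i
    simp only [Pi.smul_apply, smul_eq_mul] at this
    simp [Matrix.toEuclideanLin_apply, hv, hlam, this, RCLike.real_smul_eq_coe_mul]
  have hinner : ∀ i j, (inner 𝕜 (T (v i)) (T (v j)) : 𝕜)
      = ((lam j : ℝ) : 𝕜) * (if i = j then 1 else 0) := by
    intro i j
    rw [hT, toEuclideanLin_conj_mul, hTv j, inner_smul_right,
      orthonormal_iff_ite.mp v.orthonormal]
  set u₀ : Fin n → E := fun i => (((σ i : ℝ) : 𝕜))⁻¹ • T (v i) with hu₀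
  set P : Set (Fin n) := {i | σ i ≠ 0} with hP
  have hON : Orthonormal 𝕜 (P.restrict u₀) := by
    rw [orthonormal_iff_ite]
    rintro ⟨i, hi⟩ ⟨j, hj⟩
    simp only [Set.restrict_apply, hu₀]
    change inner 𝕜 ((((σ i : ℝ) : 𝕜))⁻¹ • T (v i)) ((((σ j : ℝ) : 𝕜))⁻¹ • T (v j)) = _
    rw [inner_smul_left, inner_smul_right, hinner i j]
    rw [map_inv₀, RCLike.conj_ofReal]
    by_cases hij : i = j
    · subst hij
      have hne : σ i ≠ 0 := hi
      simp only [if_pos rfl, Subtype.mk.injEq, mul_one, if_true]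
      rw [show ((lam i : ℝ) : 𝕜) = ((σ i : ℝ) : 𝕜) * ((σ i : ℝ) : 𝕜) by
        rw [← RCLike.ofReal_mul, hσsq]]
      have hcne : ((σ i : ℝ) : 𝕜) ≠ 0 := RCLike.ofReal_ne_zero.mpr hne
      field_simp
    · have hne2 : (⟨i, hi⟩ : P) ≠ ⟨j, hj⟩ := by simpa using hij
      rw [if_neg hij, if_neg hne2, mul_zero, mul_zero, mul_zero]
  obtain ⟨u, hu⟩ := hON.exists_orthonormalBasis_extension_of_card_eq
    (card_ι := by simp [finrank_euclideanSpace])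
  refine ⟨σ, u, v, hσ0, ?_⟩
  apply Matrix.toEuclideanLin.injective
  apply Module.Basis.ext v.toBasis
  intro j
  rw [OrthonormalBasis.coe_toBasis, map_sum, LinearMap.sum_apply]
  have hterm : ∀ i, (Matrix.toEuclideanLin (((σ i : ℝ) : 𝕜) • outer (u i) (v i))) (v j)
      = if i = j then ((σ i : ℝ) : 𝕜) • u i else 0 := by
    intro i
    rw [_root_.map_smul, LinearMap.smul_apply, toEuclideanLin_outer,
      orthonormal_iff_ite.mp v.orthonormal, smul_smul, mul_ite, mul_one, mul_zero,
      ite_smul, zero_smul]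
  rw [Finset.sum_congr rfl fun i _ => hterm i, Finset.sum_ite_eq' Finset.univ j
    (fun i => ((σ i : ℝ) : 𝕜) • u i), if_pos (Finset.mem_univ j)]
  by_cases hj0 : σ j = 0
  · have hlamj : lam j = 0 := by
      have := hσsq j
      rw [hj0, zero_mul] at this
      exact this.symm
    have hTvj : T (v j) = 0 := by
      rw [← inner_self_eq_zero (𝕜 := 𝕜)]
      rw [hinner j j, if_pos rfl, mul_one, hlamj]
      simp
    rw [hT] at hTvj
    rw [hTvj, hj0]
    simp
  · have huj : u j = u₀ j := hu j hj0
    rw [huj, hu₀]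
    simp only
    rw [smul_smul, mul_inv_cancel₀ (RCLike.ofReal_ne_zero.mpr hj0), one_smul, hT]

lemma outer_add_right (a x y : E) : outer a (x + y) = outer a x + outer a y := by
  ext i j; simp [outer, mul_add]

lemma outer_smul_right (a x : E) (c : 𝕜) : outer a (c • x) = star c • outer a x := by
  ext i j; simp [outer]; ring

lemma outer_add_left (x y b : E) : outer (x + y) b = outer x b + outer y b := by
  ext i j; simp [outer, add_mul]

lemma outer_smul_left (a : E) (b : E) (c : 𝕜) : outer (c • a) b = c • outer a b := by
  ext i j; simp [outer]; ring

lemma specNorm_outer_le (hn : 0 < n) (a b : E) : specNorm (outer a b) ≤ ‖a‖ * ‖b‖ := by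
  refine specNorm_le hn fun x hx => ?_
  rw [toEuclideanLin_outer, norm_smul]
  calc ‖(inner 𝕜 b x : 𝕜)‖ * ‖a‖ ≤ ‖b‖ * ‖x‖ * ‖a‖ :=
        mul_le_mul_of_nonneg_right (norm_inner_le_norm b x) (norm_nonneg a)
    _ = ‖a‖ * ‖b‖ := by rw [hx]; ring

lemma specNorm_outer (hn : 0 < n) {a b : E} (ha : ‖a‖ = 1) (hb : ‖b‖ = 1) :
    specNorm (outer a b) = 1 := by
  refine le_antisymm (by simpa [ha, hb] using specNorm_outer_le hn a b) ?_
  have := le_specNorm (outer a b) hb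
  have hbb : ‖(inner 𝕜 b b : 𝕜)‖ = 1 := by
    rw [inner_self_eq_norm_sq_to_K, hb]; simp
  rwa [toEuclideanLin_outer, norm_smul, hbb, ha, mul_one] at this

lemma tfun_injective {F G : Matrix (Fin n) (Fin n) 𝕜}
    (h : ∀ A, Matrix.trace (Fᴴ * A) = Matrix.trace (Gᴴ * A)) : F = G := by
  have h0 : Matrix.trace ((F - G)ᴴ * (F - G)) = 0 := by
    have := h (F - G)
    rw [Matrix.conjTranspose_sub, Matrix.sub_mul, Matrix.trace_sub, this]
    ring
  have ht : Matrix.trace ((F - G)ᴴ * (F - G))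
      = ((∑ j, ∑ i, ‖(F - G) i j‖ ^ 2 : ℝ) : 𝕜) := by
    rw [Matrix.trace]
    push_cast
    refine Finset.sum_congr rfl fun j _ => ?_
    rw [Matrix.diag_apply, Matrix.mul_apply]
    refine Finset.sum_congr rfl fun i _ => ?_
    rw [Matrix.conjTranspose_apply, RCLike.star_def, RCLike.conj_mul]
  rw [ht, RCLike.ofReal_eq_zero] at h0
  have hz : ∀ j ∈ Finset.univ, ∀ i ∈ (Finset.univ : Finset (Fin n)), ((‖(F - G) i j‖ ^ 2 : ℝ)) = 0 := by
    have houter := (Finset.sum_eq_zero_iff_of_nonneg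
      (fun j _ => Finset.sum_nonneg fun i _ => by positivity)).mp h0
    intro j hj i hi
    exact (Finset.sum_eq_zero_iff_of_nonneg (fun i _ => by positivity)).mp (houter j hj) i hi
  have : F - G = 0 := by
    ext i j
    have := hz j (Finset.mem_univ j) i (Finset.mem_univ i)
    simpa using this
  exact sub_eq_zero.mp this

lemma norm_comb {x y : E} (hx : ‖x‖ = 1) (hy : ‖y‖ = 1) (hxy : (inner 𝕜 x y : 𝕜) = 0)
    {a b : 𝕜} (hab : ‖a‖ ^ 2 + ‖b‖ ^ 2 = 1) : ‖a • x + b • y‖ = 1 := by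
  have hinner : (inner 𝕜 (a • x) (b • y) : 𝕜) = 0 := by
    rw [inner_smul_left, inner_smul_right, hxy, mul_zero, mul_zero]
  have h2 : ‖a • x + b • y‖ ^ 2 = 1 := by
    rw [norm_add_sq (𝕜 := 𝕜), hinner, map_zero, norm_smul, norm_smul, hx, hy]
    simp only [mul_pow, one_pow, mul_one]
    linarith [hab]
  nlinarith [norm_nonneg (a • x + b • y)]

lemma bessel_two {x y w : E} (hx : ‖x‖ = 1) (hy : ‖y‖ = 1) (hxy : (inner 𝕜 x y : 𝕜) = 0) :
    ‖(inner 𝕜 x w : 𝕜)‖ ^ 2 + ‖(inner 𝕜 y w : 𝕜)‖ ^ 2 ≤ ‖w‖ ^ 2 := by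
  have hON : Orthonormal 𝕜 (![x, y] : Fin 2 → E) := by
    rw [orthonormal_iff_ite]
    intro i j
    have hyx : (inner 𝕜 y x : 𝕜) = 0 := by
      rw [← inner_conj_symm, hxy, map_zero]
    fin_cases i <;> fin_cases j <;>
      simp [hx, hy, hxy, hyx, inner_self_eq_norm_sq_to_K]
  have := hON.sum_inner_products_le w (s := Finset.univ)
  simpa [Fin.sum_univ_two] using this

lemma specNorm_rank2_le (hn : 0 < n) {u v w z : E} (hu : ‖u‖ = 1) (hv : ‖v‖ = 1)
    (hw : ‖w‖ = 1) (hz : ‖z‖ = 1) (huw : (inner 𝕜 u w : 𝕜) = 0) (hvz : (inner 𝕜 v z : 𝕜) = 0)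
    {c : 𝕜} (hc : ‖c‖ ≤ 1) : specNorm (outer u v + c • outer w z) ≤ 1 := by
  refine specNorm_le hn fun x hx => ?_
  have hsplit : Matrix.toEuclideanLin (outer u v + c • outer w z)
      = Matrix.toEuclideanLin (outer u v) + Matrix.toEuclideanLin (c • outer w z) :=
    map_add _ _ _
  rw [hsplit, LinearMap.add_apply]
  rw [show (Matrix.toEuclideanLin (c • outer w z)) x = c • Matrix.toEuclideanLin (outer w z) x by
    rw [_root_.map_smul, LinearMap.smul_apply]]
  rw [toEuclideanLin_outer, toEuclideanLin_outer, smul_smul]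
  set α : 𝕜 := (inner 𝕜 v x : 𝕜)
  set β : 𝕜 := c * (inner 𝕜 z x : 𝕜)
  have hinner : (inner 𝕜 (α • u) (β • w) : 𝕜) = 0 := by
    rw [inner_smul_left, inner_smul_right, huw, mul_zero, mul_zero]
  have h2 : ‖α • u + β • w‖ ^ 2 = ‖α‖ ^ 2 + ‖β‖ ^ 2 := by
    rw [norm_add_sq (𝕜 := 𝕜), hinner, map_zero, norm_smul, norm_smul, hu, hw]
    ring
  have hc2 : ‖c‖ ^ 2 ≤ 1 := by nlinarith [norm_nonneg c]
  have hβ : ‖β‖ ^ 2 ≤ ‖(inner 𝕜 z x : 𝕜)‖ ^ 2 := by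
    rw [norm_mul, mul_pow]
    nlinarith [mul_nonneg (sub_nonneg.mpr hc2) (sq_nonneg ‖(inner 𝕜 z x : 𝕜)‖)]
  have hb2 := bessel_two (w := x) hv hz hvz
  rw [hx] at hb2
  have hb2' : ‖α‖ ^ 2 + ‖(inner 𝕜 z x : 𝕜)‖ ^ 2 ≤ 1 := by
    have := hb2; simpa using this
  have hfin : ‖α • u + β • w‖ ^ 2 ≤ 1 := by
    rw [h2]; linarith
  nlinarith [norm_nonneg (α • u + β • w)]

lemma aux_real {r : ℝ} (hr : 0 ≤ r)
    (h : ∀ s t : ℝ, 0 ≤ s → 0 ≤ t → s ^ 2 + t ^ 2 = 1 → s + t * r ≤ 1) : r = 0 := by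
  by_contra hne
  have hpos : 0 < r := lt_of_le_of_ne hr (Ne.symm hne)
  set d : ℝ := Real.sqrt (1 + r ^ 2) with hd
  have hd1 : 1 < d ^ 2 := by
    rw [hd, Real.sq_sqrt (by positivity)]; nlinarith
  have hdpos : 0 < d := Real.sqrt_pos.mpr (by positivity)
  have hd2 : d * d = 1 + r ^ 2 := Real.mul_self_sqrt (by positivity)
  have := h (1 / d) (r / d) (by positivity) (by positivity) (by
    have hh : (1/d)^2 + (r/d)^2 = (1 + r^2)/(d*d) := by ring
    rw [hh, hd2, div_self (by positivity : (0:ℝ) < 1 + r ^ 2).ne'])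
  have hval : 1 / d + r / d * r = d := by
    have hh : 1/d + r/d*r = (1 + r^2)/d := by ring
    rw [hh, ← hd2, mul_div_assoc, div_self hdpos.ne', mul_one]
  rw [hval] at this
  nlinarith

lemma half_split {a b : 𝕜} (ha : ‖a‖ ≤ 1) (hb : ‖b‖ ≤ 1) (hab : a + b = 2) : a = 1 ∧ b = 1 := by
  have hre : RCLike.re a + RCLike.re b = 2 := by
    have := congrArg (RCLike.re) hab
    simpa using this
  have hra : RCLike.re a ≤ 1 := (RCLike.re_le_norm a).trans ha
  have hrb : RCLike.re b ≤ 1 := (RCLike.re_le_norm b).trans hb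
  have hra1 : RCLike.re a = 1 := by linarith
  have hrb1 : RCLike.re b = 1 := by linarith
  have hna : ‖a‖ ^ 2 = RCLike.re a ^ 2 + RCLike.im a ^ 2 := by
    rw [RCLike.norm_sq_eq_def]; ring
  have hnb : ‖b‖ ^ 2 = RCLike.re b ^ 2 + RCLike.im b ^ 2 := by
    rw [RCLike.norm_sq_eq_def]; ring
  constructor
  · apply RCLike.ext
    · rw [hra1]; simp
    · have : RCLike.im a ^ 2 ≤ 0 := by nlinarith [norm_nonneg a]
      have him : RCLike.im a = 0 := by nlinarith
      rw [him]; simp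
  · apply RCLike.ext
    · rw [hrb1]; simp
    · have : RCLike.im b ^ 2 ≤ 0 := by nlinarith [norm_nonneg b]
      have him : RCLike.im b = 0 := by nlinarith
      rw [him]; simp

lemma exists_basis_with (hn : 0 < n) {u : E} (hu : ‖u‖ = 1) :
    ∃ p : OrthonormalBasis (Fin n) 𝕜 E, p ⟨0, hn⟩ = u := by
  have hON : Orthonormal 𝕜 (({⟨0, hn⟩} : Set (Fin n)).restrict (fun _ => u)) := by
    rw [orthonormal_iff_ite]
    rintro ⟨i, hi⟩ ⟨j, hj⟩
    simp only [Set.mem_singleton_iff] at hi hj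
    subst hi; subst hj
    simp [Set.restrict_apply, inner_self_eq_norm_sq_to_K, hu, Set.restrict]
  obtain ⟨p, hp⟩ := hON.exists_orthonormalBasis_extension_of_card_eq
    (card_ι := by simp [finrank_euclideanSpace])
  exact ⟨p, hp _ rfl⟩

lemma decomp_apply (σ : Fin n → ℝ) (u : Fin n → E) (v : OrthonormalBasis (Fin n) 𝕜 E) (j : Fin n) :
    Matrix.toEuclideanLin (∑ i, ((σ i : ℝ) : 𝕜) • outer (u i) (v i)) (v j)
      = ((σ j : ℝ) : 𝕜) • u j := by
  rw [map_sum, LinearMap.sum_apply]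
  have hterm : ∀ i, (Matrix.toEuclideanLin (((σ i : ℝ) : 𝕜) • outer (u i) (v i))) (v j)
      = if i = j then ((σ i : ℝ) : 𝕜) • u i else 0 := by
    intro i
    rw [_root_.map_smul, LinearMap.smul_apply, toEuclideanLin_outer,
      orthonormal_iff_ite.mp v.orthonormal, smul_smul, mul_ite, mul_one, mul_zero,
      ite_smul, zero_smul]
  rw [Finset.sum_congr rfl fun i _ => hterm i, Finset.sum_ite_eq' Finset.univ j
    (fun i => ((σ i : ℝ) : 𝕜) • u i), if_pos (Finset.mem_univ j)]

lemma phase_exists (w : 𝕜) : ∃ c : 𝕜, ‖c‖ = 1 ∧ c * w = ((‖w‖ : ℝ) : 𝕜) := by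
  rcases eq_or_ne w 0 with rfl | hw
  · exact ⟨1, norm_one, by simp⟩
  · refine ⟨(starRingEnd 𝕜) w * ((‖w‖ : ℝ) : 𝕜)⁻¹, ?_, ?_⟩
    · rw [norm_mul, norm_inv, RCLike.norm_conj, RCLike.norm_ofReal, abs_of_nonneg (norm_nonneg w),
        mul_inv_cancel₀ (norm_ne_zero_iff.2 hw)]
    · rw [mul_comm ((starRingEnd 𝕜) w), mul_assoc, RCLike.conj_mul]
      rw [← RCLike.ofReal_pow, ← RCLike.ofReal_inv, ← RCLike.ofReal_mul]
      congr 1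
      rw [pow_two, ← mul_assoc, inv_mul_cancel₀ (norm_ne_zero_iff.2 hw), one_mul]

lemma ofReal_norm_comb_le (hn : 0 < n) {g : Matrix (Fin n) (Fin n) 𝕜 →ₗ[𝕜] 𝕜}
    (hgd : dualNorm g ≤ 1) {M : Matrix (Fin n) (Fin n) 𝕜} (hM : specNorm M ≤ 1)
    (r : ℝ) (hr : 0 ≤ r) (hval : g M = ((r : ℝ) : 𝕜)) : r ≤ 1 := by
  have := (norm_f_le hn hgd M).trans hM
  rwa [hval, RCLike.norm_ofReal, abs_of_nonneg hr] at this

lemma eq_tfun_of_norming (hn : 0 < n) {u v : E} (hu : ‖u‖ = 1) (hv : ‖v‖ = 1)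
    (g : Matrix (Fin n) (Fin n) 𝕜 →ₗ[𝕜] 𝕜) (hgd : dualNorm g ≤ 1)
    (hg1 : g (outer u v) = 1) : g = tfun (outer u v) := by
  obtain ⟨p, hp⟩ := exists_basis_with hn hu
  obtain ⟨q, hq⟩ := exists_basis_with hn hv
  set i0 : Fin n := ⟨0, hn⟩ with hi0
  have hgle : ∀ A, ‖g A‖ ≤ specNorm A := norm_f_le hn hgd
  have hqv : ∀ j, j ≠ i0 → (inner 𝕜 v (q j) : 𝕜) = 0 := by
    intro j hj
    rw [← hq, orthonormal_iff_ite.mp q.orthonormal, if_neg (Ne.symm hj)]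
  have hpu : ∀ i, i ≠ i0 → (inner 𝕜 u (p i) : 𝕜) = 0 := by
    intro i hi
    rw [← hp, orthonormal_iff_ite.mp p.orthonormal, if_neg (Ne.symm hi)]
  -- case (b) : top row
  have hb : ∀ j, j ≠ i0 → g (outer u (q j)) = 0 := by
    intro j hj
    set w := g (outer u (q j)) with hwdef
    obtain ⟨c, hc1, hcw⟩ := phase_exists w
    have key : ∀ s t : ℝ, 0 ≤ s → 0 ≤ t → s ^ 2 + t ^ 2 = 1 → s + t * ‖w‖ ≤ 1 := by
      intro s t hs ht hst
      set b' : E := ((s : ℝ) : 𝕜) • v + (((t : ℝ) : 𝕜) * (starRingEnd 𝕜) c) • q j with hb'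
      have hqj : ‖q j‖ = 1 := q.orthonormal.1 j
      have hb'n : ‖b'‖ = 1 := by
        refine norm_comb hv hqj (hqv j hj) ?_
        rw [norm_mul, RCLike.norm_conj, hc1, mul_one, RCLike.norm_ofReal, RCLike.norm_ofReal,
          abs_of_nonneg hs, abs_of_nonneg ht, hst]
      have hout : outer u b' = ((s : ℝ) : 𝕜) • outer u v + (((t : ℝ) : 𝕜) * c) • outer u (q j) := by
        rw [hb', outer_add_right, outer_smul_right, outer_smul_right]
        simp [RCLike.star_def, _root_.map_mul, RCLike.conj_ofReal, RCLike.conj_conj]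
      have hgb : g (outer u b') = ((s + t * ‖w‖ : ℝ) : 𝕜) := by
        rw [hout, map_add, LinearMap.map_smul, LinearMap.map_smul, hg1, smul_eq_mul, smul_eq_mul, mul_one,
          ← hwdef, mul_assoc, hcw]
        push_cast
        ring
      have hsp : specNorm (outer u b') ≤ 1 := by
        have := specNorm_outer_le hn u b'
        rwa [hu, hb'n, one_mul] at this
      exact ofReal_norm_comb_le hn hgd hsp (s + t * ‖w‖)
        (by positivity) hgb
    rw [hwdef] at *
    exact norm_eq_zero.mp (aux_real (norm_nonneg _) key)
  -- case (c) : left column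
  have hc : ∀ i, i ≠ i0 → g (outer (p i) v) = 0 := by
    intro i hi
    set w := g (outer (p i) v) with hwdef
    obtain ⟨c, hc1, hcw⟩ := phase_exists w
    have key : ∀ s t : ℝ, 0 ≤ s → 0 ≤ t → s ^ 2 + t ^ 2 = 1 → s + t * ‖w‖ ≤ 1 := by
      intro s t hs ht hst
      set a' : E := ((s : ℝ) : 𝕜) • u + (((t : ℝ) : 𝕜) * c) • p i with ha'
      have hpi : ‖p i‖ = 1 := p.orthonormal.1 i
      have ha'n : ‖a'‖ = 1 := by
        refine norm_comb hu hpi (hpu i hi) ?_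
        rw [norm_mul, hc1, mul_one, RCLike.norm_ofReal, RCLike.norm_ofReal,
          abs_of_nonneg hs, abs_of_nonneg ht, hst]
      have hout : outer a' v = ((s : ℝ) : 𝕜) • outer u v + (((t : ℝ) : 𝕜) * c) • outer (p i) v := by
        rw [ha', outer_add_left, outer_smul_left, outer_smul_left]
      have hgb : g (outer a' v) = ((s + t * ‖w‖ : ℝ) : 𝕜) := by
        rw [hout, map_add, LinearMap.map_smul, LinearMap.map_smul, hg1, smul_eq_mul, smul_eq_mul, mul_one,
          ← hwdef, mul_assoc, hcw]
        push_cast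
        ring
      have hsp : specNorm (outer a' v) ≤ 1 := by
        have := specNorm_outer_le hn a' v
        rwa [hv, ha'n, one_mul] at this
      exact ofReal_norm_comb_le hn hgd hsp (s + t * ‖w‖) (by positivity) hgb
    rw [hwdef] at *
    exact norm_eq_zero.mp (aux_real (norm_nonneg _) key)
  -- case (d) : the rest
  have hd : ∀ i j, i ≠ i0 → j ≠ i0 → g (outer (p i) (q j)) = 0 := by
    intro i j hi hj
    set w := g (outer (p i) (q j)) with hwdef
    obtain ⟨c, hc1, hcw⟩ := phase_exists w
    have hsp : specNorm (outer u v + c • outer (p i) (q j)) ≤ 1 :=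
      specNorm_rank2_le hn hu hv (p.orthonormal.1 i) (q.orthonormal.1 j)
        (hpu i hi) (hqv j hj) (le_of_eq hc1)
    have hgb : g (outer u v + c • outer (p i) (q j)) = ((1 + ‖w‖ : ℝ) : 𝕜) := by
      rw [map_add, LinearMap.map_smul, hg1, smul_eq_mul, ← hwdef, hcw]
      push_cast
      ring
    have := ofReal_norm_comb_le hn hgd hsp (1 + ‖w‖) (by positivity) hgb
    have hw0 : ‖w‖ = 0 := by linarith [norm_nonneg w]
    rw [hwdef] at *
    exact norm_eq_zero.mp hw0
  have hone : (inner 𝕜 v v : 𝕜) = 1 := by rw [inner_self_eq_norm_sq_to_K, hv]; simp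
  have huone : (inner 𝕜 u u : 𝕜) = 1 := by rw [inner_self_eq_norm_sq_to_K, hu]; simp
  have hvals : ∀ i j, g (outer (p i) (q j)) = tfun (outer u v) (outer (p i) (q j)) := by
    intro i j
    have htv : tfun (outer u v) (outer (p i) (q j))
        = (inner 𝕜 (q j) v : 𝕜) * (inner 𝕜 u (p i) : 𝕜) := by
      rw [tfun_apply, trace_outer_mul, toEuclideanLin_outer, inner_smul_right]
    by_cases hi : i = i0
    · by_cases hj : j = i0
      · subst hi; subst hj
        rw [htv, hp, hq, hg1, hone, huone, mul_one]
      · subst hi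
        have h0 : (inner 𝕜 (q j) v : 𝕜) = 0 := by rw [← inner_conj_symm, hqv j hj, map_zero]
        rw [htv, hp, hb j hj, h0, zero_mul]
    · by_cases hj : j = i0
      · subst hj
        rw [htv, hq, hc i hi, hpu i hi, mul_zero]
      · rw [hd i j hi hj, htv, hpu i hi, mul_zero]
  apply LinearMap.ext
  intro A
  have e1 : ∀ (h : Matrix (Fin n) (Fin n) 𝕜 →ₗ[𝕜] 𝕜), h A = ∑ i, ∑ j,
      (inner 𝕜 (p i) (Matrix.toEuclideanLin A (q j)) : 𝕜) * h (outer (p i) (q j)) := by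
    intro h
    conv_lhs => rw [matrix_decomp p q A]
    rw [map_sum]
    refine Finset.sum_congr rfl fun i _ => ?_
    rw [map_sum]
    refine Finset.sum_congr rfl fun j _ => ?_
    rw [LinearMap.map_smul, smul_eq_mul]
  rw [e1 g, e1 (tfun (outer u v))]
  exact Finset.sum_congr rfl fun i _ => Finset.sum_congr rfl fun j _ => by rw [hvals i j]

end ExtremalHelpers

/-- STATEMENT 1 -/theorem stmt1 {n : ℕ} (f : Matrix (Fin n) (Fin n) 𝕜 →ₗ[𝕜] 𝕜)
    (F : Matrix (Fin n) (Fin n) 𝕜)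
    (hF : ∀ A : Matrix (Fin n) (Fin n) 𝕜, f A = Matrix.trace (Fᴴ * A))
    (hf : dualNorm f = 1) :
    (∀ f₁ f₂ : Matrix (Fin n) (Fin n) 𝕜 →ₗ[𝕜] 𝕜,
        dualNorm f₁ = 1 → dualNorm f₂ = 1 → f = (1 / 2 : ℝ) • (f₁ + f₂) →
        f = f₁ ∧ f = f₂) ↔
      ∃ u v : EuclideanSpace 𝕜 (Fin n), ‖u‖ = 1 ∧ ‖v‖ = 1 ∧ F = outer u v := by
  classical
  rcases Nat.eq_zero_or_pos n with hn0 | hn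
  · exfalso
    subst hn0
    have hempty : {r : ℝ | ∃ A : Matrix (Fin 0) (Fin 0) 𝕜, specNorm A = 1 ∧ r = ‖f A‖} = ∅ := by
      ext r
      simp only [Set.mem_setOf_eq, Set.mem_empty_iff_false, iff_false, not_exists]
      rintro A ⟨hA, -⟩
      have hs : {r : ℝ | ∃ v : EuclideanSpace 𝕜 (Fin 0), ‖v‖ = 1 ∧
          r = ‖Matrix.toEuclideanLin A v‖} = ∅ := by
        ext r'
        simp only [Set.mem_setOf_eq, Set.mem_empty_iff_false, iff_false, not_exists]
        rintro v ⟨hv, -⟩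
        rw [EuclideanSpace.norm_eq] at hv
        simp at hv
      rw [specNorm, hs, Real.sSup_empty] at hA
      exact one_ne_zero hA.symm
    rw [dualNorm, hempty, Real.sSup_empty] at hf
    norm_num at hf
  · have hf' : f = tfun F := LinearMap.ext fun A => hF A
    constructor
    · -- extremal → rank-one
      intro hex
      obtain ⟨σ, u, v, hσ0, hFdec⟩ := svd (𝕜 := 𝕜) F
      have hsum : ∑ i, σ i = 1 := by
        have hd : dualNorm f = ∑ i, σ i := by
          rw [hf', hFdec]
          exact dualNorm_decomp hn σ hσ0 u v
        rw [hf] at hd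
        exact hd.symm
      by_cases htwo : ∃ a b : Fin n, a ≠ b ∧ σ a ≠ 0 ∧ σ b ≠ 0
      · exfalso
        obtain ⟨a0, b0, hab0, ha0, hb0⟩ := htwo
        obtain ⟨a, b, hab, hble, ha, hb⟩ :
            ∃ a b : Fin n, a ≠ b ∧ σ b ≤ σ a ∧ σ a ≠ 0 ∧ σ b ≠ 0 := by
          rcases le_total (σ b0) (σ a0) with h | h
          · exact ⟨a0, b0, hab0, h, ha0, hb0⟩
          · exact ⟨b0, a0, hab0.symm, h, hb0, ha0⟩
        set δ : Fin n → ℝ := fun i => (if i = a then σ b else 0) - (if i = b then σ b else 0)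
          with hδ
        have hδa : δ a = σ b := by simp [hδ, hab]
        have hδb : δ b = -σ b := by simp [hδ, Ne.symm hab]
        have hδo : ∀ i, i ≠ a → i ≠ b → δ i = 0 := by
          intro i hia hib; simp [hδ, hia, hib]
        have hδsum : ∑ i, δ i = 0 := by
          rw [hδ, Finset.sum_sub_distrib,
            Finset.sum_ite_eq' Finset.univ a (fun _ => σ b),
            Finset.sum_ite_eq' Finset.univ b (fun _ => σ b)]
          simp
        have hσ₁0 : ∀ i, 0 ≤ σ i + δ i := by
          intro i
          rcases eq_or_ne i a with rfl | hia
          · rw [hδa]; exact add_nonneg (hσ0 i) (hσ0 b)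
          · rcases eq_or_ne i b with rfl | hib
            · rw [hδb]; linarith [le_refl (σ i)]
            · rw [hδo i hia hib, add_zero]; exact hσ0 i
        have hσ₂0 : ∀ i, 0 ≤ σ i - δ i := by
          intro i
          rcases eq_or_ne i a with rfl | hia
          · rw [hδa]; linarith
          · rcases eq_or_ne i b with rfl | hib
            · rw [hδb]; linarith [hσ0 i]
            · rw [hδo i hia hib, sub_zero]; exact hσ0 i
        set F₁ := ∑ i, (((σ i + δ i : ℝ)) : 𝕜) • outer (u i) (v i) with hF₁
        set F₂ := ∑ i, (((σ i - δ i : ℝ)) : 𝕜) • outer (u i) (v i) with hF₂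
        have hd1 : dualNorm (tfun F₁) = 1 := by
          rw [hF₁, dualNorm_decomp hn (fun i => σ i + δ i) hσ₁0 u v,
            Finset.sum_add_distrib, hsum, hδsum, add_zero]
        have hd2 : dualNorm (tfun F₂) = 1 := by
          rw [hF₂, dualNorm_decomp hn (fun i => σ i - δ i) hσ₂0 u v,
            Finset.sum_sub_distrib, hsum, hδsum, sub_zero]
        have hFF : F₁ + F₂ = F + F := by
          rw [hF₁, hF₂, hFdec, ← Finset.sum_add_distrib, ← Finset.sum_add_distrib]
          refine Finset.sum_congr rfl fun i _ => ?_
          rw [← add_smul, ← add_smul]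
          congr 1
          push_cast
          ring
        have heq : f = (1 / 2 : ℝ) • (tfun F₁ + tfun F₂) := by
          apply LinearMap.ext
          intro A
          rw [LinearMap.smul_apply, LinearMap.add_apply, tfun_apply, tfun_apply, hF A]
          have h12 : Matrix.trace (F₁ᴴ * A) + Matrix.trace (F₂ᴴ * A)
              = Matrix.trace (Fᴴ * A) + Matrix.trace (Fᴴ * A) := by
            rw [← Matrix.trace_add, ← Matrix.add_mul, ← Matrix.conjTranspose_add, hFF,
              Matrix.conjTranspose_add, Matrix.add_mul, Matrix.trace_add]
          rw [h12, RCLike.real_smul_eq_coe_mul]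
          push_cast
          ring
        obtain ⟨h1, h2⟩ := hex (tfun F₁) (tfun F₂) hd1 hd2 heq
        have hFeq : F = F₁ := by
          refine tfun_injective fun A => ?_
          have := LinearMap.congr_fun (hf'.symm.trans h1) A
          simpa using this
        have h1b : Matrix.toEuclideanLin F (v b) = ((σ b : ℝ) : 𝕜) • u b := by
          rw [hFdec]; exact decomp_apply σ (⇑u) v b
        have h2b : Matrix.toEuclideanLin F₁ (v b) = (((σ b + δ b : ℝ)) : 𝕜) • u b := by
          rw [hF₁]; exact decomp_apply (fun i => σ i + δ i) (⇑u) v b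
        have hzz : ((σ b : ℝ) : 𝕜) • u b = (((σ b + δ b : ℝ)) : 𝕜) • u b := by
          rw [← h1b, hFeq, h2b]
        rw [hδb] at hzz
        have hbz : ((σ b : ℝ) : 𝕜) • u b = 0 := by
          rw [hzz]
          norm_num
        have hnb := congrArg norm hbz
        rw [norm_smul, norm_zero, u.orthonormal.1 b, mul_one, RCLike.norm_ofReal] at hnb
        exact hb (abs_eq_zero.mp hnb)
      · push_neg at htwo
        have hexist : ∃ a, σ a ≠ 0 := by
          by_contra hno
          push_neg at hno
          rw [Finset.sum_congr rfl fun i _ => hno i] at hsum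
          simp at hsum
        obtain ⟨a, ha⟩ := hexist
        have hzero : ∀ i, i ≠ a → σ i = 0 := fun i hi => htwo a i (Ne.symm hi) ha
        have hσa : σ a = 1 := by
          rw [← hsum, Finset.sum_eq_single a (fun i _ hi => hzero i hi)
            (fun h => absurd (Finset.mem_univ a) h)]
        refine ⟨u a, v a, u.orthonormal.1 a, v.orthonormal.1 a, ?_⟩
        rw [hFdec, Finset.sum_eq_single a (fun i _ hi => by rw [hzero i hi]; simp)
          (fun h => absurd (Finset.mem_univ a) h), hσa]
        simp
    · rintro ⟨u, v, hu, hv, hFuv⟩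
      intro f₁ f₂ h1 h2 heq
      have hX0 : specNorm (outer u v) = 1 := specNorm_outer hn hu hv
      have hone : (inner 𝕜 v v : 𝕜) = 1 := by rw [inner_self_eq_norm_sq_to_K, hv]; simp
      have huone : (inner 𝕜 u u : 𝕜) = 1 := by rw [inner_self_eq_norm_sq_to_K, hu]; simp
      have hfX0 : f (outer u v) = 1 := by
        rw [hF, hFuv, trace_outer_mul, toEuclideanLin_outer, inner_smul_right, hone, huone,
          mul_one]
      have hsum2 : f₁ (outer u v) + f₂ (outer u v) = 2 := by
        have hh := LinearMap.congr_fun heq (outer u v)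
        rw [hfX0, LinearMap.smul_apply, LinearMap.add_apply, RCLike.real_smul_eq_coe_mul] at hh
        push_cast at hh
        linear_combination (-2 : 𝕜) * hh
      have hb1 : ‖f₁ (outer u v)‖ ≤ 1 := by
        have := norm_f_le hn (le_of_eq h1) (outer u v)
        rwa [hX0] at this
      have hb2 : ‖f₂ (outer u v)‖ ≤ 1 := by
        have := norm_f_le hn (le_of_eq h2) (outer u v)
        rwa [hX0] at this
      obtain ⟨e1, e2⟩ := half_split hb1 hb2 hsum2
      have hftfun : f = tfun (outer u v) := by rw [hf', hFuv]
      have hf1 : f₁ = tfun (outer u v) := eq_tfun_of_norming hn hu hv f₁ (le_of_eq h1) e1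
      have hf2 : f₂ = tfun (outer u v) := eq_tfun_of_norming hn hu hv f₂ (le_of_eq h2) e2
      exact ⟨hftfun.trans hf1.symm, hftfun.trans hf2.symm⟩
end

section
/- Let 𝒳 ⊂ 𝔽^{n×n} (𝔽 = ℝ or ℂ) be a subspace and w ∈ 𝔽^n a unit vector such that Xw = 0 for every X ∈ 𝒳. Let Y ∈ 𝔽^{n×n} \ 𝒳 satisfy Yw = ‖Y‖₂ w. Then min_{X∈𝒳} ‖Y − X‖₂ = ‖Y‖₂, i.e., the zero matrix is a spectral approximation of Y from 𝒳. -/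
open Matrix

variable {𝕜 : Type*} [RCLike 𝕜]

lemma specNorm_bddAbove {m : Type*} [Fintype m] [DecidableEq m]
    (A : Matrix m m 𝕜) :
    BddAbove {r : ℝ | ∃ v : EuclideanSpace 𝕜 m, ‖v‖ = 1 ∧
      r = ‖Matrix.toEuclideanLin A v‖} := by
  refine ⟨‖(Matrix.toEuclideanLin A).toContinuousLinearMap‖, ?_⟩
  rintro r ⟨v, hv, rfl⟩
  calc ‖Matrix.toEuclideanLin A v‖
      = ‖(Matrix.toEuclideanLin A).toContinuousLinearMap v‖ := rfl
    _ ≤ ‖(Matrix.toEuclideanLin A).toContinuousLinearMap‖ * ‖v‖ :=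
        ContinuousLinearMap.le_opNorm _ _
    _ = _ := by rw [hv, mul_one]

lemma le_specNorm_s7 {m : Type*} [Fintype m] [DecidableEq m]
    (A : Matrix m m 𝕜) (v : EuclideanSpace 𝕜 m) (hv : ‖v‖ = 1) :
    ‖Matrix.toEuclideanLin A v‖ ≤ specNorm A :=
  le_csSup (specNorm_bddAbove A) ⟨v, hv, rfl⟩

theorem stmt7 {n : ℕ} (𝒳 : Submodule 𝕜 (Matrix (Fin n) (Fin n) 𝕜))
    (w : EuclideanSpace 𝕜 (Fin n)) (hw : ‖w‖ = 1)
    (hker : ∀ X ∈ 𝒳, Matrix.toEuclideanLin X w = 0)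
    (Y : Matrix (Fin n) (Fin n) 𝕜) (hY : Y ∉ 𝒳)
    (hYw : Matrix.toEuclideanLin Y w = specNorm Y • w) :
    IsSpectralApprox 𝒳 Y 0 ∧ specNorm (Y - 0) = specNorm Y := by
  have hnn : 0 ≤ specNorm Y := le_trans (norm_nonneg _) (le_specNorm_s7 Y w hw)
  refine ⟨⟨Submodule.zero_mem 𝒳, fun X hX => ?_⟩, by rw [sub_zero]⟩
  rw [sub_zero]
  have key : ‖Matrix.toEuclideanLin (Y - X) w‖ = specNorm Y := by
    rw [map_sub, LinearMap.sub_apply, hker X hX, sub_zero, hYw, norm_smul, hw,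
      mul_one, Real.norm_of_nonneg hnn]
  calc specNorm Y = ‖Matrix.toEuclideanLin (Y - X) w‖ := key.symm
    _ ≤ specNorm (Y - X) := le_specNorm_s7 _ w hw
end

section
/- Let J_λ ∈ 𝔽^{n×n} (𝔽 = ℝ or ℂ) be the n×n Jordan block with eigenvalue λ (ones on the first superdiagonal), let 1 ≤ k ≤ n−1, and let 𝒳 = span{I, J_λ, …, J_λ^{k−1}}. Then X_* = J_λ^k − (J_λ − λI)^k is a spectral approximation of Y = J_λ^k from 𝒳, and the value of the approximation problem is ‖Y − X_*‖₂ = ‖J_0^k‖₂ = 1. -/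
open Matrix

variable {𝕜 : Type*} [RCLike 𝕜]

section Stmt10Aux

lemma coord_le_norm (v : EuclideanSpace 𝕜 (Fin n)) (i : Fin n) : ‖v i‖ ≤ ‖v‖ := by
  rw [EuclideanSpace.norm_eq]
  rw [show ‖v i‖ = Real.sqrt (‖v i‖ ^ 2) from (Real.sqrt_sq (norm_nonneg _)).symm]
  exact Real.sqrt_le_sqrt (Finset.single_le_sum (f := fun j => ‖v j‖ ^ 2)
    (fun j _ => sq_nonneg _) (Finset.mem_univ i))

lemma specSet_bdd (A : Matrix (Fin n) (Fin n) 𝕜) :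
    BddAbove {r : ℝ | ∃ v : EuclideanSpace 𝕜 (Fin n), ‖v‖ = 1 ∧ r = ‖Matrix.toEuclideanLin A v‖} := by
  refine ⟨‖LinearMap.toContinuousLinearMap (Matrix.toEuclideanLin A)‖, ?_⟩
  rintro r ⟨v, hv, rfl⟩
  calc ‖Matrix.toEuclideanLin A v‖
      = ‖LinearMap.toContinuousLinearMap (Matrix.toEuclideanLin A) v‖ := by simp
    _ ≤ ‖LinearMap.toContinuousLinearMap (Matrix.toEuclideanLin A)‖ * ‖v‖ :=
        ContinuousLinearMap.le_opNorm _ _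
    _ = _ := by rw [hv, mul_one]

lemma coord_toEuclideanLin (A : Matrix (Fin n) (Fin n) 𝕜) (v : EuclideanSpace 𝕜 (Fin n))
    (i : Fin n) : (Matrix.toEuclideanLin A v) i = ∑ j, A i j * v j := by
  rfl

lemma entry_le_specNorm (A : Matrix (Fin n) (Fin n) 𝕜) (i j : Fin n) :
    ‖A i j‖ ≤ specNorm A := by
  have hmem : ‖Matrix.toEuclideanLin A (EuclideanSpace.single j (1:𝕜))‖ ∈
      {r : ℝ | ∃ v : EuclideanSpace 𝕜 (Fin n), ‖v‖ = 1 ∧ r = ‖Matrix.toEuclideanLin A v‖} :=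
    ⟨_, by simp [EuclideanSpace.norm_single], rfl⟩
  refine le_trans ?_ (le_csSup (specSet_bdd A) hmem)
  have hc : (Matrix.toEuclideanLin A (EuclideanSpace.single j (1:𝕜))) i = A i j := by
    rw [coord_toEuclideanLin]
    simp [EuclideanSpace.single_apply]
  calc ‖A i j‖ = ‖(Matrix.toEuclideanLin A (EuclideanSpace.single j (1:𝕜))) i‖ := by rw [hc]
    _ ≤ _ := coord_le_norm _ i

lemma specNorm_le_of (hn : 0 < n) (A : Matrix (Fin n) (Fin n) 𝕜) {C : ℝ}
    (h : ∀ v : EuclideanSpace 𝕜 (Fin n), ‖v‖ = 1 → ‖Matrix.toEuclideanLin A v‖ ≤ C) :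
    specNorm A ≤ C := by
  apply csSup_le
  · exact ⟨_, ⟨EuclideanSpace.single ⟨0, hn⟩ (1:𝕜), by simp [EuclideanSpace.norm_single], rfl⟩⟩
  · rintro r ⟨v, hv, rfl⟩; exact h v hv

lemma shift_pow_apply (N : Matrix (Fin n) (Fin n) 𝕜)
    (hN : ∀ i j : Fin n, N i j = if (i : ℕ) + 1 = (j : ℕ) then 1 else 0) (m : ℕ) :
    ∀ i j : Fin n, (N ^ m) i j = if (i : ℕ) + m = (j : ℕ) then 1 else 0 := by
  induction m with
  | zero =>
    intro i j
    simp [Matrix.one_apply, Fin.ext_iff]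
  | succ m ih =>
    intro i j
    rw [pow_succ, Matrix.mul_apply]
    by_cases h : (i : ℕ) + m < n
    · rw [Finset.sum_eq_single (⟨(i : ℕ) + m, h⟩ : Fin n)]
      · rw [ih, hN]
        simp [Fin.val_mk, add_assoc]
      · intro b _ hb
        rw [ih]
        rw [if_neg, zero_mul]
        intro hc
        exact hb (Fin.ext hc.symm)
      · simp
    · rw [if_neg (by omega), Finset.sum_eq_zero]
      intro b _
      rw [ih, if_neg (by omega), zero_mul]

lemma shift_norm_le (k : ℕ) (A : Matrix (Fin n) (Fin n) 𝕜)
    (hA : ∀ i j : Fin n, A i j = if (i : ℕ) + k = (j : ℕ) then 1 else 0)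
    (v : EuclideanSpace 𝕜 (Fin n)) : ‖Matrix.toEuclideanLin A v‖ ≤ ‖v‖ := by
  have hcoord : ∀ i : Fin n, (Matrix.toEuclideanLin A v) i =
      if h : (i : ℕ) + k < n then v ⟨(i : ℕ) + k, h⟩ else 0 := by
    intro i
    rw [coord_toEuclideanLin]
    by_cases h : (i : ℕ) + k < n
    · rw [dif_pos h, Finset.sum_eq_single (⟨(i : ℕ) + k, h⟩ : Fin n)]
      · rw [hA, if_pos rfl, one_mul]
      · intro b _ hb
        rw [hA, if_neg (fun hc => hb (Fin.ext hc.symm)), zero_mul]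
      · simp
    · rw [dif_neg h, Finset.sum_eq_zero]
      intro b _
      rw [hA, if_neg (by omega), zero_mul]
  rw [EuclideanSpace.norm_eq, EuclideanSpace.norm_eq]
  apply Real.sqrt_le_sqrt
  set s : Finset (Fin n) := Finset.univ.filter (fun i : Fin n => (i : ℕ) + k < n) with hs
  set σ : Fin n → Fin n := fun i => if h : (i : ℕ) + k < n then ⟨(i : ℕ) + k, h⟩ else i with hσ
  calc ∑ i : Fin n, ‖(Matrix.toEuclideanLin A v) i‖ ^ 2
      = ∑ i ∈ s, ‖v (σ i)‖ ^ 2 := by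
        rw [← Finset.sum_subset (Finset.subset_univ s)]
        · apply Finset.sum_congr rfl
          intro i hi
          have h : (i : ℕ) + k < n := (Finset.mem_filter.mp hi).2
          rw [hcoord, dif_pos h,
            show σ i = ⟨(i : ℕ) + k, h⟩ from dif_pos h]
        · intro i _ hi
          have h : ¬ ((i : ℕ) + k < n) := by
            simpa [hs, Finset.mem_filter] using hi
          rw [hcoord, dif_neg h, norm_zero]
          simp
    _ = ∑ j ∈ s.image σ, ‖v j‖ ^ 2 := by
        rw [Finset.sum_image]
        intro a ha b hb hab
        have ha' : (a : ℕ) + k < n := (Finset.mem_filter.mp ha).2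
        have hb' : (b : ℕ) + k < n := (Finset.mem_filter.mp hb).2
        rw [hσ] at hab
        simp only [dif_pos ha', dif_pos hb'] at hab
        have := congrArg Fin.val hab
        simp at this
        exact Fin.ext (by omega)
    _ ≤ ∑ j : Fin n, ‖v j‖ ^ 2 := by
        apply Finset.sum_le_sum_of_subset_of_nonneg (Finset.subset_univ _)
        intro j _ _
        exact sq_nonneg _

end Stmt10Aux

theorem stmt10 {n k : ℕ} (hk : 1 ≤ k) (hkn : k ≤ n - 1) (lam : 𝕜)
    (J : Matrix (Fin n) (Fin n) 𝕜)
    (hJ : ∀ i j : Fin n, J i j =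
      if (i : ℕ) + 1 = (j : ℕ) then 1 else if i = j then lam else 0) :
    IsSpectralApprox (Submodule.span 𝕜 (Set.range fun i : Fin k => J ^ (i : ℕ)))
        (J ^ k) (J ^ k - (J - lam • 1) ^ k) ∧
      specNorm (J ^ k - (J ^ k - (J - lam • 1) ^ k)) = 1 := by
  have hn0 : 0 < n := by omega
  have hkn' : k < n := by omega
  set 𝒳 := Submodule.span 𝕜 (Set.range fun i : Fin k => J ^ (i : ℕ)) with h𝒳
  set N := J - lam • (1 : Matrix (Fin n) (Fin n) 𝕜) with hNdef
  have hNe : ∀ i j : Fin n, N i j = if (i : ℕ) + 1 = (j : ℕ) then 1 else 0 := by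
    intro i j
    rw [hNdef, Matrix.sub_apply, Matrix.smul_apply, Matrix.one_apply, hJ i j]
    by_cases h1 : (i : ℕ) + 1 = (j : ℕ)
    · have h2 : i ≠ j := by intro h; rw [h] at h1; omega
      simp [h1, h2]
    · by_cases h2 : i = j <;> simp [h1, h2]
  have hNp := shift_pow_apply N hNe
  have hJN : J = N + lam • 1 := by rw [hNdef]; abel
  have hcomm : Commute N (lam • (1 : Matrix (Fin n) (Fin n) 𝕜)) :=
    (Commute.one_right N).smul_right lam
  have hcomm' : Commute J ((-lam) • (1 : Matrix (Fin n) (Fin n) 𝕜)) :=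
    (Commute.one_right J).smul_right (-lam)
  have key : ∀ (P Q : Matrix (Fin n) (Fin n) 𝕜) (c : 𝕜), P = Q + c • 1 →
      ∀ m : ℕ, P ^ m = ∑ i ∈ Finset.range (m + 1),
        ((m.choose i : 𝕜) * c ^ (m - i)) • Q ^ i := by
    intro P Q c hPQ m
    rw [hPQ, ((Commute.one_right Q).smul_right c).add_pow]
    apply Finset.sum_congr rfl
    intro i _
    rw [smul_pow, one_pow, mul_smul_comm, mul_one,
      ← (Nat.cast_commute (m.choose i) _).eq, ← nsmul_eq_mul,
      ← Nat.cast_smul_eq_nsmul 𝕜, smul_smul]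
  have hpow := key J N lam hJN
  have hNJ : N = J + (-lam) • 1 := by rw [hNdef, neg_smul]; abel
  have hpow' := key N J (-lam) hNJ
  have hJmemX : ∀ i, i < k → J ^ i ∈ 𝒳 := fun i hi =>
    Submodule.subset_span ⟨⟨i, hi⟩, rfl⟩
  have hNmem : ∀ j, j < k → N ^ j ∈ 𝒳 := by
    intro j hj
    rw [hpow' j]
    apply Submodule.sum_mem
    intro i hi
    exact Submodule.smul_mem _ _ (hJmemX i (by
      have := Finset.mem_range.mp hi; omega))
  have hXsEq : J ^ k - N ^ k = ∑ i ∈ Finset.range k,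
      ((k.choose i : 𝕜) * lam ^ (k - i)) • N ^ i := by
    rw [hpow k, Finset.sum_range_succ]
    simp
  have hXsmem : J ^ k - N ^ k ∈ 𝒳 := by
    rw [hXsEq]
    exact Submodule.sum_mem _ fun i hi =>
      Submodule.smul_mem _ _ (hNmem i (Finset.mem_range.mp hi))
  have i0lt : (0 : ℕ) < n := hn0
  let i0 : Fin n := ⟨0, hn0⟩
  let jk : Fin n := ⟨k, hkn'⟩
  have hNi : ∀ i : ℕ, (N ^ i) i0 jk = if i = k then 1 else 0 := by
    intro i
    rw [hNp i i0 jk]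
    simp only [i0, jk, Fin.val_mk, zero_add]
  have hJkE : (J ^ k) i0 jk = 1 := by
    rw [hpow k, Matrix.sum_apply]
    rw [Finset.sum_eq_single k]
    · simp [Matrix.smul_apply, hNi]
    · intro b _ hb
      simp [Matrix.smul_apply, hNi, hb]
    · intro h
      exact absurd (Finset.self_mem_range_succ k) h
  have hXentry : ∀ X ∈ 𝒳, X i0 jk = 0 := by
    intro X hX
    induction hX using Submodule.span_induction with
    | mem x hx =>
      obtain ⟨i, rfl⟩ := hx
      show (J ^ (i : ℕ)) i0 jk = 0
      rw [hpow (i : ℕ), Matrix.sum_apply]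
      apply Finset.sum_eq_zero
      intro b hb
      have hb' : b ≤ (i : ℕ) := by have := Finset.mem_range.mp hb; omega
      have : b ≠ k := by have := i.isLt; omega
      simp [Matrix.smul_apply, hNi, this]
    | zero => simp
    | add x y _ _ hx hy => simp [Matrix.add_apply, hx, hy]
    | smul c x _ hx => simp [Matrix.smul_apply, hx]
  have hspecNk : specNorm (N ^ k) = 1 := by
    apply le_antisymm
    · apply specNorm_le_of hn0
      intro v hv
      calc ‖Matrix.toEuclideanLin (N ^ k) v‖ ≤ ‖v‖ := shift_norm_le k _ (hNp k) v
        _ = 1 := hv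
    · have h := entry_le_specNorm (N ^ k) i0 jk
      rw [hNi k, if_pos rfl] at h
      simpa using h
  refine ⟨⟨hXsmem, ?_⟩, ?_⟩
  · intro X hX
    have h1 : J ^ k - (J ^ k - N ^ k) = N ^ k := sub_sub_cancel _ _
    rw [h1, hspecNk]
    have h := entry_le_specNorm (J ^ k - X) i0 jk
    rw [Matrix.sub_apply, hJkE, hXentry X hX, sub_zero] at h
    simpa using h
  · rw [sub_sub_cancel, hspecNk]
end

section
/- Let 𝒳 = span{X_1, …, X_k} ⊂ ℝ^{n×n} be a k-dimensional subspace, Y ∈ ℝ^{n×n} \ 𝒳, and let X_* ∈ 𝒳 be a spectral approximation of Y with σ₁ = ‖Y − X_*‖₂. Suppose v_1, …, v_ℓ are unit maximal right singular vectors of Y − X_* with corresponding maximal left singular vectors u_1, …, u_ℓ (i.e., (Y − X_*)v_j = σ₁ u_j), and ω_1, …, ω_ℓ are positive reals with ω_1 + … + ω_ℓ = 1 such that Σ_j ω_j u_jᵀ X v_j = 0 for all X ∈ 𝒳. Set U = [u_1, …, u_ℓ], V = [v_1, …, v_ℓ], Λ = ½ diag(ω_1, …, ω_ℓ), B = VΛUᵀ,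 and Z = [[UΛUᵀ, UΛVᵀ], [VΛUᵀ, VΛVᵀ]] ∈ ℝ^{2n×2n}. Then Z is symmetric positive semidefinite with trace(Z) = 1, trace(B X_i) = 0 for i = 1, …, k, and trace(B Y) = σ₁/2. -/
open Matrix

variable {𝕜 : Type*} [RCLike 𝕜]

section Aux
open Matrix

set_option synthInstance.maxHeartbeats 1000000 in
lemma specNorm_ge {n : ℕ} (A : Matrix (Fin n) (Fin n) ℝ) (v : EuclideanSpace ℝ (Fin n))
    (hv : ‖v‖ = 1) : ‖Matrix.toEuclideanLin A v‖ ≤ specNorm A := by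
  apply le_csSup
  · refine ⟨‖(Matrix.toEuclideanLin A).toContinuousLinearMap‖, ?_⟩
    rintro r ⟨w, hw, rfl⟩
    have := (Matrix.toEuclideanLin A).toContinuousLinearMap.le_opNorm w
    simpa [hw] using this
  · exact ⟨v, hv, rfl⟩

lemma specNorm_pos {n : ℕ} (A : Matrix (Fin n) (Fin n) ℝ) (hA : A ≠ 0) :
    0 < specNorm A := by
  have hf : Matrix.toEuclideanLin A ≠ 0 := by
    intro h
    exact hA (by simpa using (map_eq_zero_iff (Matrix.toEuclideanLin (𝕜 := ℝ))
      (LinearEquiv.injective _)).mp h)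
  obtain ⟨v0, hv0⟩ : ∃ v0, Matrix.toEuclideanLin A v0 ≠ 0 := by
    by_contra h
    push_neg at h
    exact hf (LinearMap.ext fun x => h x)
  have hv0ne : v0 ≠ 0 := fun h => hv0 (by simp [h])
  have hwn : ‖(‖v0‖⁻¹ • v0 : EuclideanSpace ℝ (Fin n))‖ = 1 := norm_smul_inv_norm hv0ne
  have hpos : 0 < ‖Matrix.toEuclideanLin A (‖v0‖⁻¹ • v0)‖ := by
    rw [LinearMap.map_smul]
    have : (‖v0‖⁻¹ : ℝ) • Matrix.toEuclideanLin A v0 ≠ 0 := by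
      simp [smul_ne_zero_iff, hv0, norm_ne_zero_iff.mpr hv0ne]
    simpa [norm_pos_iff] using this
  exact lt_of_lt_of_le hpos (specNorm_ge A _ hwn)

lemma inner_toEuclideanLin {n : ℕ} (A : Matrix (Fin n) (Fin n) ℝ)
    (x y : EuclideanSpace ℝ (Fin n)) :
    (inner ℝ x (Matrix.toEuclideanLin A y) : ℝ) = ∑ i, x i * (A *ᵥ (fun i => y i)) i := by
  simp [Matrix.toEuclideanLin_apply, PiLp.inner_apply, RCLike.inner_apply, conj_trivial]
  exact Finset.sum_congr rfl fun i _ => mul_comm _ _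

lemma sum_sq_of_norm_one {n : ℕ} (x : EuclideanSpace ℝ (Fin n)) (h : ‖x‖ = 1) :
    ∑ i, x i * x i = 1 := by
  have h2 := real_inner_self_eq_norm_sq x
  rw [h] at h2
  simp only [PiLp.inner_apply, RCLike.inner_apply, conj_trivial] at h2
  simpa [mul_comm] using h2

lemma trace_mul_half_diag {ℓ : ℕ} (ω : Fin ℓ → ℝ) (C : Matrix (Fin ℓ) (Fin ℓ) ℝ) :
    (C * ((1/2 : ℝ) • Matrix.diagonal ω)).trace = (1/2 : ℝ) * ∑ j, C j j * ω j := by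
  rw [Matrix.mul_smul, Matrix.trace_smul, smul_eq_mul]
  congr 1
  simp [Matrix.trace, Matrix.diag, Matrix.mul_diagonal]

lemma trace_fromBlocks' {p : Type*} [Fintype p] (A B C D : Matrix p p ℝ) :
    (Matrix.fromBlocks A B C D).trace = A.trace + D.trace := by
  simp [Matrix.trace, Matrix.diag, Fintype.sum_sum_type, Matrix.fromBlocks]

end Aux

theorem stmt11 {n k ℓ : ℕ} (X : Fin k → Matrix (Fin n) (Fin n) ℝ)
    (hdim : Module.finrank ℝ (Submodule.span ℝ (Set.range X)) = k)
    (Y Xs : Matrix (Fin n) (Fin n) ℝ)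
    (hY : Y ∉ Submodule.span ℝ (Set.range X))
    (happrox : IsSpectralApprox (Submodule.span ℝ (Set.range X)) Y Xs)
    (u v : Fin ℓ → EuclideanSpace ℝ (Fin n))
    (hv1 : ∀ j, ‖v j‖ = 1)
    (hvmax : ∀ j, ‖Matrix.toEuclideanLin (Y - Xs) (v j)‖ = specNorm (Y - Xs))
    (hu : ∀ j, Matrix.toEuclideanLin (Y - Xs) (v j) = specNorm (Y - Xs) • u j)
    (ω : Fin ℓ → ℝ) (hω : ∀ j, 0 < ω j) (hωs : ∑ j, ω j = 1)
    (horth : ∀ W ∈ Submodule.span ℝ (Set.range X),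
      ∑ j, ω j * (inner ℝ (u j) (Matrix.toEuclideanLin W (v j)) : ℝ) = 0)
    (U V : Matrix (Fin n) (Fin ℓ) ℝ)
    (hU : U = Matrix.of fun i j => u j i) (hV : V = Matrix.of fun i j => v j i)
    (Λ : Matrix (Fin ℓ) (Fin ℓ) ℝ) (hΛ : Λ = (1 / 2 : ℝ) • Matrix.diagonal ω)
    (B : Matrix (Fin n) (Fin n) ℝ) (hB : B = V * Λ * Uᵀ)
    (Z : Matrix (Fin n ⊕ Fin n) (Fin n ⊕ Fin n) ℝ)
    (hZ : Z = Matrix.fromBlocks (U * Λ * Uᵀ) (U * Λ * Vᵀ) (V * Λ * Uᵀ) (V * Λ * Vᵀ)) :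
    Zᵀ = Z ∧ Z.PosSemidef ∧ Z.trace = 1 ∧
      (∀ i, (B * X i).trace = 0) ∧ (B * Y).trace = specNorm (Y - Xs) / 2 := by
  set σ := specNorm (Y - Xs) with hσdef
  have hXsmem := happrox.1
  have hYXs : Y - Xs ≠ 0 := by
    intro h
    exact hY (by rwa [sub_eq_zero.mp h])
  have hσpos : 0 < σ := specNorm_pos _ hYXs
  have hu1 : ∀ j, ‖u j‖ = 1 := by
    intro j
    have h1 := hvmax j
    rw [hu j, norm_smul, Real.norm_eq_abs, abs_of_pos hσpos] at h1
    have := mul_left_cancel₀ hσpos.ne' (h1.trans (mul_one σ).symm)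
    exact this
  have huu : ∀ j, ∑ i, u j i * u j i = 1 := fun j => sum_sq_of_norm_one _ (hu1 j)
  have hvv : ∀ j, ∑ i, v j i * v j i = 1 := fun j => sum_sq_of_norm_one _ (hv1 j)
  -- diagonal entry formula
  have hC : ∀ (M : Matrix (Fin n) (Fin n) ℝ) (j : Fin ℓ),
      (Uᵀ * M * V) j j = ∑ i, u j i * (M *ᵥ (fun i => v j i)) i := by
    intro M j
    simp only [Matrix.mul_apply, Matrix.transpose_apply, hU, hV, Matrix.of_apply,
      Matrix.mulVec, dotProduct, Finset.sum_mul]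
    rw [Finset.sum_comm]
    simp [Finset.mul_sum, mul_assoc]
  -- key trace formula
  have key : ∀ M : Matrix (Fin n) (Fin n) ℝ,
      (B * M).trace = (1/2 : ℝ) * ∑ j, ω j * ∑ i, u j i * (M *ᵥ (fun i => v j i)) i := by
    intro M
    rw [hB, show V * Λ * Uᵀ * M = (V * Λ) * (Uᵀ * M) by rw [Matrix.mul_assoc],
      Matrix.trace_mul_comm, ← Matrix.mul_assoc, Matrix.mul_assoc (Uᵀ) M V, hΛ,
      trace_mul_half_diag]
    congr 1
    refine Finset.sum_congr rfl fun j _ => ?_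
    rw [← Matrix.mul_assoc, hC M j, mul_comm]
  -- trace (B * W) = 0 for W in the span
  have hzero : ∀ W ∈ Submodule.span ℝ (Set.range X), (B * W).trace = 0 := by
    intro W hW
    have h := horth W hW
    rw [key]
    have : ∑ j, ω j * ∑ i, u j i * (W *ᵥ (fun i => v j i)) i = 0 := by
      rw [← h]
      refine Finset.sum_congr rfl fun j _ => ?_
      rw [inner_toEuclideanLin]
    rw [this, mul_zero]
  -- trace (B * (Y - Xs)) = σ / 2
  have hin : ∀ j, ∑ i, u j i * ((Y - Xs) *ᵥ (fun i => v j i)) i = σ := by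
    intro j
    rw [← inner_toEuclideanLin, hu j, real_inner_smul_right, real_inner_self_eq_norm_sq,
      hu1 j]
    ring
  have hBY : (B * Y).trace = σ / 2 := by
    have hsplit : (B * Y).trace = (B * (Y - Xs)).trace + (B * Xs).trace := by
      rw [Matrix.mul_sub, Matrix.trace_sub]
      ring
    rw [hsplit, hzero Xs hXsmem, add_zero, key]
    have : ∑ j, ω j * ∑ i, u j i * ((Y - Xs) *ᵥ (fun i => v j i)) i = σ := by
      calc ∑ j, ω j * ∑ i, u j i * ((Y - Xs) *ᵥ (fun i => v j i)) i
          = ∑ j, ω j * σ := Finset.sum_congr rfl fun j _ => by rw [hin j]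
        _ = (∑ j, ω j) * σ := by rw [Finset.sum_mul]
        _ = σ := by rw [hωs, one_mul]
    rw [this]
    ring
  -- Z as a congruence
  have hΛt : Λᵀ = Λ := by
    rw [hΛ]
    simp [Matrix.transpose_smul, Matrix.diagonal_transpose]
  have hZW : Z = Matrix.fromRows U V * Λ * (Matrix.fromRows U V)ᵀ := by
    rw [hZ, Matrix.transpose_fromRows, Matrix.fromRows_mul,
      Matrix.fromRows_mul_fromCols]
  have hZt : Zᵀ = Z := by
    rw [hZW, Matrix.transpose_mul, Matrix.transpose_mul, Matrix.transpose_transpose, hΛt,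
      Matrix.mul_assoc]
  have hΛpsd : Λ.PosSemidef := by
    rw [hΛ, ← Matrix.diagonal_smul]
    exact Matrix.posSemidef_diagonal_iff.mpr fun j => by
      have := (hω j).le
      simp only [Pi.smul_apply, smul_eq_mul]
      positivity
  have hZpsd : Z.PosSemidef := by
    rw [hZW, show (Matrix.fromRows U V)ᵀ = (Matrix.fromRows U V)ᴴ by
      rw [Matrix.conjTranspose_eq_transpose_of_trivial]]
    exact hΛpsd.mul_mul_conjTranspose_same _
  have hdiagtr : ∀ W : Matrix (Fin n) (Fin ℓ) ℝ,
      (W * Λ * Wᵀ).trace = (1/2 : ℝ) * ∑ j, (Wᵀ * W) j j * ω j := by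
    intro W
    rw [show W * Λ * Wᵀ = (W * Λ) * Wᵀ from rfl, Matrix.trace_mul_comm, ← Matrix.mul_assoc,
      hΛ, trace_mul_half_diag]
  have hUtU : ∀ j, (Uᵀ * U) j j = 1 := by
    intro j
    simp only [Matrix.mul_apply, Matrix.transpose_apply, hU, Matrix.of_apply]
    exact huu j
  have hVtV : ∀ j, (Vᵀ * V) j j = 1 := by
    intro j
    simp only [Matrix.mul_apply, Matrix.transpose_apply, hV, Matrix.of_apply]
    exact hvv j
  have hZtr : Z.trace = 1 := by
    rw [hZ, trace_fromBlocks', hdiagtr U, hdiagtr V]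
    have h1 : ∑ j, (Uᵀ * U) j j * ω j = 1 := by
      rw [← hωs]
      exact Finset.sum_congr rfl fun j _ => by rw [hUtU j, one_mul]
    have h2 : ∑ j, (Vᵀ * V) j j * ω j = 1 := by
      rw [← hωs]
      exact Finset.sum_congr rfl fun j _ => by rw [hVtV j, one_mul]
    rw [h1, h2]
    ring
  exact ⟨hZt, hZpsd, hZtr,
    fun i => hzero (X i) (Submodule.subset_span ⟨i, rfl⟩), hBY⟩
end
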